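/- Let S = U_θ be a rotation by angle θ, CNOT the 4×4 permutation matrix swapping |10⟩ and |11⟩, and U = ((S ⊗ S)·CNOT)². Then U ∈ SO(4) has eigenvalues 1, 1, exp(iα), exp(-iα), where α = 2·arccos(cos²θ). -/

import Mathlib

open Polynomial Kronecker
set_option maxHeartbeats 2000000
set_option maxRecDepth 8000

/-- The rotation matrix by angle `θ`. -/
noncomputable def Urot (θ : ℝ) : Matrix (Fin 2) (Fin 2) ℝ :=
  !![Real.cos θ, -Real.sin θ; Real.sin θ, Real.cos θ]

/-- The CNOT gate: `|b₁b₂⟩ ↦ |b₁, b₂ ⊕ b₁⟩`. -/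
def CNOT : Matrix (Fin 2 × Fin 2) (Fin 2 × Fin 2) ℝ :=
  Matrix.of fun i j => if i.1 = j.1 ∧ i.2 = j.1 + j.2 then 1 else 0

def e4 : Fin 4 ≃ Fin 2 × Fin 2 where
  toFun := ![(0,0), (0,1), (1,0), (1,1)]
  invFun := fun p => ![![0, 1], ![2, 3]] p.1 p.2
  left_inv := by decide
  right_inv := by decide

lemma CNOT_orth : CNOT * CNOT.transpose = 1 := by
  ext ⟨i1, i2⟩ ⟨j1, j2⟩
  fin_cases i1 <;> fin_cases i2 <;> fin_cases j1 <;> fin_cases j2 <;>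
    simp [CNOT, Matrix.mul_apply, Fintype.sum_prod_type, Fin.sum_univ_two,
      Matrix.one_apply, Matrix.transpose_apply, Prod.ext_iff]

lemma Urot_orth (θ : ℝ) : Urot θ * (Urot θ).transpose = 1 := by
  ext i j
  fin_cases i <;> fin_cases j <;>
    simp [Urot, Matrix.mul_apply, Fin.sum_univ_two, Matrix.one_apply,
      Matrix.transpose_apply, Matrix.vecHead, Matrix.vecTail] <;>
    nlinarith [Real.sin_sq_add_cos_sq θ]

lemma CNOT_sub : CNOT.submatrix e4 e4 = !![1,0,0,0; 0,1,0,0; 0,0,0,1; 0,0,1,0] := by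
  ext i j
  fin_cases i <;> fin_cases j <;>
    simp [CNOT, e4, Prod.ext_iff, Matrix.vecHead, Matrix.vecTail]

lemma CNOT_det : CNOT.det = -1 := by
  rw [← Matrix.det_submatrix_equiv_self e4 CNOT, CNOT_sub]
  simp [Matrix.det_succ_row_zero, Fin.sum_univ_succ]

lemma Urot_det (θ : ℝ) : (Urot θ).det = 1 := by
  simp [Urot, Matrix.det_fin_two_of]
  nlinarith [Real.sin_sq_add_cos_sq θ]

lemma M_orth (θ : ℝ) :
    ((Urot θ ⊗ₖ Urot θ) * CNOT) * ((Urot θ ⊗ₖ Urot θ) * CNOT).transpose = 1 := by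
  rw [Matrix.transpose_mul, Matrix.mul_assoc, ← Matrix.mul_assoc CNOT, CNOT_orth,
    Matrix.one_mul, ← Matrix.kroneckerMap_transpose, ← Matrix.mul_kronecker_mul,
    Urot_orth, Matrix.one_kronecker_one]

noncomputable def Mlit (θ : ℝ) : Matrix (Fin 4) (Fin 4) ℝ :=
  let c := Real.cos θ; let s := Real.sin θ
  !![c^2, -(c*s), s^2, -(c*s);
     c*s, c^2, -(c*s), -(s^2);
     c*s, -(s^2), -(c*s), c^2;
     s^2, c*s, c^2, c*s]

lemma Msub (θ : ℝ) : ((Urot θ ⊗ₖ Urot θ) * CNOT).submatrix e4 e4 = Mlit θ := by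
  ext i j
  fin_cases i <;> fin_cases j <;>
    · simp [Urot, CNOT, e4, Mlit, Matrix.mul_apply, Fintype.sum_prod_type,
        Fin.sum_univ_two, Prod.ext_iff, Matrix.vecHead, Matrix.vecTail]
      try ring

lemma Usub (θ : ℝ) :
    (((Urot θ ⊗ₖ Urot θ) * CNOT) ^ 2).submatrix e4 e4 = Mlit θ * Mlit θ := by
  rw [pow_two, ← Matrix.submatrix_mul_equiv _ _ _ e4 _, Msub]

noncomputable def Ulit (θ : ℝ) : Matrix (Fin 4) (Fin 4) ℝ :=
  let c := Real.cos θ; let s := Real.sin θ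
  !![(-1)*c^2*s^2 + (1)*c^4, (-1)*s^4 + (-1)*c^2*s^2 + (-2)*c^3*s, (-1)*c*s^3 + (2)*c^2*s^2 + (-1)*c^3*s, (1)*c*s^3 + (-1)*c^3*s;
     (-1)*s^4 + (-1)*c^2*s^2 + (2)*c^3*s, (-1)*c^2*s^2 + (1)*c^4, (1)*c*s^3 + (-1)*c^3*s, (-1)*c*s^3 + (-2)*c^2*s^2 + (-1)*c^3*s;
     (-1)*c*s^3 + (1)*c^3*s, (1)*c*s^3 + (-2)*c^2*s^2 + (1)*c^3*s, (2)*c*s^3 + (1)*c^2*s^2 + (1)*c^4, (1)*s^4 + (-1)*c^2*s^2;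
     (1)*c*s^3 + (2)*c^2*s^2 + (1)*c^3*s, (-1)*c*s^3 + (1)*c^3*s, (1)*s^4 + (-1)*c^2*s^2, (-2)*c*s^3 + (1)*c^2*s^2 + (1)*c^4]

lemma MM (θ : ℝ) : Mlit θ * Mlit θ = Ulit θ := by
  ext i j
  fin_cases i <;> fin_cases j <;>
    · simp [Mlit, Ulit, Matrix.mul_apply, Fin.sum_univ_four,
        Matrix.vecHead, Matrix.vecTail]
      try ring

noncomputable def Wlit (θ : ℝ) : Matrix (Fin 4) (Fin 4) (Polynomial ℂ) :=
  let c : Polynomial ℂ := C ((Real.cos θ : ℂ)); let s : Polynomial ℂ := C ((Real.sin θ : ℂ))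
  !![X - ((-1)*c^2*s^2 + (1)*c^4), -((-1)*s^4 + (-1)*c^2*s^2 + (-2)*c^3*s), -((-1)*c*s^3 + (2)*c^2*s^2 + (-1)*c^3*s), -((1)*c*s^3 + (-1)*c^3*s);
     -((-1)*s^4 + (-1)*c^2*s^2 + (2)*c^3*s), X - ((-1)*c^2*s^2 + (1)*c^4), -((1)*c*s^3 + (-1)*c^3*s), -((-1)*c*s^3 + (-2)*c^2*s^2 + (-1)*c^3*s);
     -((-1)*c*s^3 + (1)*c^3*s), -((1)*c*s^3 + (-2)*c^2*s^2 + (1)*c^3*s), X - ((2)*c*s^3 + (1)*c^2*s^2 + (1)*c^4), -((1)*s^4 + (-1)*c^2*s^2);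
     -((1)*c*s^3 + (2)*c^2*s^2 + (1)*c^3*s), -((-1)*c*s^3 + (1)*c^3*s), -((1)*s^4 + (-1)*c^2*s^2), X - ((-2)*c*s^3 + (1)*c^2*s^2 + (1)*c^4)]

lemma charW (θ : ℝ) : Matrix.charmatrix ((Ulit θ).map Complex.ofReal) = Wlit θ := by
  ext i j
  fin_cases i <;> fin_cases j <;>
    · simp [Matrix.charmatrix_apply, Ulit, Wlit, Matrix.map_apply,
        Matrix.diagonal_apply, Matrix.vecHead, Matrix.vecTail]
      try push_cast
      try simp only [map_add, map_sub, map_mul, map_neg, map_pow, map_one, map_ofNat]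
      try ring

lemma det_fin_four' {R : Type*} [CommRing R] (a00 a01 a02 a03 a10 a11 a12 a13 a20 a21 a22 a23 a30 a31 a32 a33 : R) :
    Matrix.det !![a00, a01, a02, a03; a10, a11, a12, a13; a20, a21, a22, a23; a30, a31, a32, a33] =
      a00*a11*a22*a33 - a00*a11*a23*a32 - a00*a12*a21*a33 + a00*a12*a23*a31 + a00*a13*a21*a32 - a00*a13*a22*a31 - a01*a10*a22*a33 + a01*a10*a23*a32 + a01*a12*a20*a33 - a01*a12*a23*a30 - a01*a13*a20*a32 + a01*a13*a22*a30 + a02*a10*a21*a33 - a02*a10*a23*a31 - a02*a11*a20*a33 + a02*a11*a23*a30 + a02*a13*a20*a31 - a02*a13*a21*a30 - a03*a10*a21*a32 + a03*a10*a22*a31 + a03*a11*a20*a32 - a03*a11*a22*a30 - a03*a12*a20*a31 + a03*a12*a21*a30 := by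
  simp [Matrix.det_succ_row_zero, Fin.sum_univ_succ, Fin.succAbove, Fin.castSucc,
    Fin.castAdd, Fin.castLE, Fin.lt_def, -Fin.val_fin_lt, -Fin.lt_def]
  ring

theorem eigenvalues_of_cnot_conjugate (θ : ℝ) :
    let U : Matrix (Fin 2 × Fin 2) (Fin 2 × Fin 2) ℝ :=
      ((Urot θ ⊗ₖ Urot θ) * CNOT) ^ 2
    let α : ℝ := 2 * Real.arccos ((Real.cos θ) ^ 2)
    U * U.transpose = 1 ∧ U.det = 1 ∧
    (U.map (Complex.ofReal)).charpoly =
      (X - C 1) ^ 2 * (X - C (Complex.exp (Complex.I * (α : ℂ)))) *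
        (X - C (Complex.exp (-(Complex.I * (α : ℂ))))) := by
  intro U α
  have hUdef : U = ((Urot θ ⊗ₖ Urot θ) * CNOT) ^ 2 := rfl
  have hαdef : α = 2 * Real.arccos ((Real.cos θ) ^ 2) := rfl
  have hc := Real.sin_sq_add_cos_sq θ
  refine ⟨?_, ?_, ?_⟩
  · rw [hUdef]
    set M := (Urot θ ⊗ₖ Urot θ) * CNOT with hM
    have h2 : M * (M.transpose * M.transpose) = M.transpose := by
      rw [← Matrix.mul_assoc, M_orth θ, Matrix.one_mul]
    rw [pow_two, Matrix.transpose_mul, Matrix.mul_assoc, h2, M_orth θ]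
  · rw [hUdef, Matrix.det_pow, Matrix.det_mul, Matrix.det_kronecker, Urot_det,
      CNOT_det]
    norm_num
  · rw [hUdef, ← Matrix.charpoly_reindex e4.symm]
    have hre : (Matrix.reindex e4.symm e4.symm)
        (((((Urot θ ⊗ₖ Urot θ) * CNOT) ^ 2)).map Complex.ofReal) =
        (Ulit θ).map Complex.ofReal := by
      rw [Matrix.reindex_apply]
      simp only [Equiv.symm_symm]
      rw [Matrix.submatrix_map, Usub θ, MM]
    rw [hre]
    -- facts about α
    have hα1 : Real.cos α = 2 * (Real.cos θ)^4 - 1 := by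
      rw [hαdef, Real.cos_two_mul, Real.cos_arccos (by nlinarith) (by nlinarith)]
      ring
    have hprod : Complex.exp (Complex.I * (α : ℂ)) *
        Complex.exp (-(Complex.I * (α : ℂ))) = 1 := by
      rw [← Complex.exp_add]
      simp
    have hsum : Complex.exp (Complex.I * (α : ℂ)) +
        Complex.exp (-(Complex.I * (α : ℂ))) = 4 * ((Real.cos θ : ℂ))^4 - 2 := by
      rw [show Complex.I * (α : ℂ) = (α : ℂ) * Complex.I by ring,
        show -((α : ℂ) * Complex.I) = (-(α : ℂ)) * Complex.I by ring,
        Complex.exp_mul_I, Complex.exp_mul_I, Complex.cos_neg, Complex.sin_neg]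
      have h2 : Complex.cos (α : ℂ) = ((2 * (Real.cos θ)^4 - 1 : ℝ) : ℂ) := by
        rw [← Complex.ofReal_cos, hα1]
      rw [h2]
      push_cast
      ring
    have hexpand : ∀ a b : ℂ, (X - C a) * (X - C b) =
        X^2 - C (a + b) * X + C (a * b) := by
      intro a b
      rw [map_add, map_mul]
      ring
    rw [mul_assoc, hexpand, hsum, hprod, map_one]
    simp only [map_sub, map_mul, map_pow, map_ofNat]
    -- now a concrete polynomial identity
    rw [Matrix.charpoly, charW θ, Wlit, det_fin_four']
    set cc : Polynomial ℂ := C ((Real.cos θ : ℂ)) with hcc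
    set ss : Polynomial ℂ := C ((Real.sin θ : ℂ)) with hss
    have hC : ss^2 + cc^2 = 1 := by
      rw [hcc, hss, ← map_pow, ← map_pow, ← map_add, ← map_one C]
      congr 1
      exact_mod_cast hc
    linear_combination ((1)*1 + (-2)*X^2 + (1)*ss^2 + (-2)*ss^2*X^2 + (1)*ss^4 + (-2)*ss^4*X^2 + (1)*ss^6 + (-2)*ss^6*X^2 + (1)*ss^8 + (1)*ss^10 + (1)*ss^12 + (1)*ss^14 + (1)*cc^2 + (-2)*cc^2*X^2 + (2)*cc^2*ss^2 + (-4)*cc^2*ss^2*X^2 + (3)*cc^2*ss^4 + (-6)*cc^2*ss^4*X^2 + (4)*cc^2*ss^6 + (5)*cc^2*ss^8 + (6)*cc^2*ss^10 + (7)*cc^2*ss^12 + (1)*cc^4 + (-4)*cc^4*X + (6)*cc^4*X^2 + (3)*cc^4*ss^2 + (-4)*cc^4*ss^2*X + (2)*cc^4*ss^2*X^2 + (6)*cc^4*ss^4 + (-4)*cc^4*ss^4*X + (10)*cc^4*ss^6 + (-4)*cc^4*ss^6*X + (15)*cc^4*ss^8 + (21)*cc^4*ss^10 + (1)*cc^6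 + (-4)*cc^6*X + (6)*cc^6*X^2 + (4)*cc^6*ss^2 + (-8)*cc^6*ss^2*X + (10)*cc^6*ss^4 + (-12)*cc^6*ss^4*X + (20)*cc^6*ss^6 + (35)*cc^6*ss^8 + (1)*cc^8 + (-4)*cc^8*X + (5)*cc^8*ss^2 + (-12)*cc^8*ss^2*X + (15)*cc^8*ss^4 + (35)*cc^8*ss^6 + (1)*cc^10 + (-4)*cc^10*X + (6)*cc^10*ss^2 + (21)*cc^10*ss^4 + (1)*cc^12 + (7)*cc^12*ss^2 + (1)*cc^14) * hC
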